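/- Let λ̌ > λ > λ̂ > 0 be real numbers with Λ₁ := λ̂/(λ̌ − λ̂) < 1. Then there exist a real number τ₀ and differentiable positive functions a, b : (τ₀, ∞) → ℝ solving the ODE system a' = 2λ̂ + 2(λ − λ̂) a²/b², b' = 2λ̌ − 2(λ̌ − λ) a/b, such that: Λ₁ < a(τ)/b(τ) < 1 for all τ > τ₀; a/b is strictly decreasing; lim_{τ→τ₀⁺} a(τ) = lim_{τ→τ₀⁺} b(τ) = 0 and lim_{τ→τ₀⁺} a(τ)/b(τ) = 1; lim_{τ→∞} a(τ)/b(τ) = Λ₁; and there exist constants C₂ ≥ C₁ > 0 with C₁τ ≤ b(τ) ≤ C₂τ for all large τ. -/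

import Mathlib

open Real MeasureTheory Set Filter intervalIntegral Topology

set_option maxHeartbeats 2000000

lemma expMul_integrableOn_Iic {c : ℝ} (hc : 0 < c) (s : ℝ) :
    IntegrableOn (fun u => Real.exp (c * u)) (Iic s) := by
  have hcont : Continuous fun u : ℝ => Real.exp (c * u) :=
    Real.continuous_exp.comp (continuous_const.mul continuous_id)
  have hderiv : ∀ x : ℝ, HasDerivAt (fun t => Real.exp (c * t) / c) (Real.exp (c * x)) x := by
    intro x
    have h1 : HasDerivAt (fun t : ℝ => c * t) c x := by
      simpa using (hasDerivAt_id x).const_mul c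
    have h2 := h1.exp.div_const c
    simpa [mul_comm, mul_div_assoc, mul_div_cancel_left₀ _ hc.ne'] using h2
  refine integrableOn_Iic_of_intervalIntegral_norm_bounded (Real.exp (c * s) / c) s
    (fun y => hcont.integrableOn_Ioc) tendsto_id ?_
  filter_upwards [Iic_mem_atBot s] with y hy
  have hint : IntervalIntegrable (fun u => Real.exp (c * u)) volume y s :=
    hcont.intervalIntegrable y s
  have : (∫ x in y..s, ‖Real.exp (c * x)‖) = ∫ x in y..s, Real.exp (c * x) := by
    congr 1; ext x; exact Real.norm_of_nonneg (Real.exp_pos _).le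
  rw [id_eq, this, intervalIntegral.integral_eq_sub_of_hasDerivAt (fun x _ => hderiv x) hint]
  have := (Real.exp_pos (c * y)).le
  rw [div_sub_div_same]
  gcongr
  linarith


/-- ODE content of the type-I ancient solution connecting the two Einstein
metrics on the total space of a Riemannian submersion: existence of a positive solution of
`a' = 2λ̂ + 2(λ−λ̂)a²/b²`, `b' = 2λ̌ − 2(λ̌−λ)a/b` on `(τ₀,∞)` with `Λ₁ < a/b < 1`,
`a/b` strictly decreasing, `a,b → 0` and `a/b → 1` at `τ₀⁺`, `a/b → Λ₁` at `∞`, and linear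
growth bounds on `b`. -/
theorem stmt_15 (lamh lamc lam : ℝ) (h1 : 0 < lamh) (h2 : lamh < lam) (h3 : lam < lamc)
    (Λ₁ : ℝ) (hΛ₁ : Λ₁ = lamh / (lamc - lamh)) (hΛ₁lt : Λ₁ < 1) :
    ∃ (τ₀ : ℝ) (a b : ℝ → ℝ),
      (∀ τ ∈ Set.Ioi τ₀, 0 < a τ ∧ 0 < b τ) ∧
      (∀ τ ∈ Set.Ioi τ₀,
        HasDerivAt a (2 * lamh + 2 * (lam - lamh) * (a τ) ^ 2 / (b τ) ^ 2) τ) ∧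
      (∀ τ ∈ Set.Ioi τ₀,
        HasDerivAt b (2 * lamc - 2 * (lamc - lam) * (a τ / b τ)) τ) ∧
      (∀ τ ∈ Set.Ioi τ₀, Λ₁ < a τ / b τ ∧ a τ / b τ < 1) ∧
      StrictAntiOn (fun τ => a τ / b τ) (Set.Ioi τ₀) ∧
      Filter.Tendsto a (nhdsWithin τ₀ (Set.Ioi τ₀)) (nhds 0) ∧
      Filter.Tendsto b (nhdsWithin τ₀ (Set.Ioi τ₀)) (nhds 0) ∧
      Filter.Tendsto (fun τ => a τ / b τ) (nhdsWithin τ₀ (Set.Ioi τ₀)) (nhds 1) ∧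
      Filter.Tendsto (fun τ => a τ / b τ) Filter.atTop (nhds Λ₁) ∧
      ∃ C₁ C₂ : ℝ, 0 < C₁ ∧ C₁ ≤ C₂ ∧
        ∀ᶠ τ in Filter.atTop, C₁ * τ ≤ b τ ∧ b τ ≤ C₂ * τ := by
  have hch : 0 < lamc - lamh := by linarith
  have hcl : 0 < lamc - lam := by linarith
  have hL1 : Λ₁ < 1 := hΛ₁lt
  have hLpos : 0 < Λ₁ := hΛ₁ ▸ div_pos h1 hch
  have hrel : (lamc - lamh) * Λ₁ = lamh := by rw [hΛ₁]; field_simp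
  set κ : ℝ := 2 * (lamc - lamh) * (1 - Λ₁) with hκ
  have hκpos : 0 < κ := by
    have : 0 < 1 - Λ₁ := by linarith
    positivity
  set γ : ℝ := ((2 * lamc - 2 * (lamc - lam) * Λ₁) - 2 * lam) / κ with hγ
  have hGLgt : 2 * lam < 2 * lamc - 2 * (lamc - lam) * Λ₁ := by nlinarith
  have hγpos : 0 < γ := div_pos (by linarith) hκpos
  have hγκ : γ * κ = (2 * lamc - 2 * (lamc - lam) * Λ₁) - 2 * lam := by
    rw [hγ]; field_simp
  set E : ℝ → ℝ := fun s => Real.exp (κ * s) with hE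
  have hEpos : ∀ s, 0 < E s := fun s => Real.exp_pos _
  have h1E : ∀ s, 0 < 1 + E s := fun s => by have := hEpos s; linarith
  set r : ℝ → ℝ := fun s => Λ₁ + (1 - Λ₁) / (1 + E s) with hr
  set bt : ℝ → ℝ := fun s => Real.exp (2 * lam * s + γ * Real.log (1 + E s)) with hbt
  have hbtpos : ∀ s, 0 < bt s := fun s => Real.exp_pos _
  have hrlt : ∀ s, Λ₁ < r s ∧ r s < 1 := by
    intro s
    constructor
    · have : 0 < (1 - Λ₁) / (1 + E s) := div_pos (by linarith) (h1E s)
      simp only [hr]; linarith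
    · have h' : (1 - Λ₁) / (1 + E s) < (1 - Λ₁) / 1 := by
        apply div_lt_div_of_pos_left (by linarith) one_pos
        have := hEpos s; linarith
      simp only [hr]; rw [div_one] at h'; linarith
  have hrpos : ∀ s, 0 < r s := fun s => lt_trans hLpos (hrlt s).1
  -- derivatives in s
  have hE' : ∀ s, HasDerivAt E (κ * E s) s := by
    intro s
    have h0 : HasDerivAt (fun x : ℝ => κ * x) κ s := by simpa using (hasDerivAt_id s).const_mul κ
    simpa [hE, mul_comm] using h0.exp
  have h1E' : ∀ s, HasDerivAt (fun x => 1 + E x) (κ * E s) s := fun s => (hE' s).const_add 1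
  have hr' : ∀ s, HasDerivAt r ((1 - Λ₁) * (-(κ * E s) / (1 + E s) ^ 2)) s := by
    intro s
    exact (((h1E' s).inv (h1E s).ne').const_mul (1 - Λ₁)).const_add Λ₁
  have hbt' : ∀ s, HasDerivAt bt (bt s * (2 * lam + γ * (κ * E s) / (1 + E s))) s := by
    intro s
    have hlin : HasDerivAt (fun x : ℝ => 2 * lam * x) (2 * lam) s := by
      simpa using (hasDerivAt_id s).const_mul (2 * lam)
    have hlog : HasDerivAt (fun x => γ * Real.log (1 + E x)) (γ * (κ * E s / (1 + E s))) s :=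
      ((h1E' s).log (h1E s).ne').const_mul γ
    have h := (hlin.add hlog).exp
    simpa [hbt, mul_div_assoc] using h
  -- key identities
  have hId1 : ∀ s, 2 * lam + γ * (κ * E s) / (1 + E s)
      = 2 * lamc - 2 * (lamc - lam) * r s := by
    intro s
    have hnum : γ * (κ * E s) = ((2 * lamc - 2 * (lamc - lam) * Λ₁) - 2 * lam) * E s := by
      rw [← hγκ]; ring
    rw [hnum, hr]
    field_simp [(h1E s).ne']
    ring
  have hId2 : ∀ s, (1 - Λ₁) * (-(κ * E s) / (1 + E s) ^ 2)
      + r s * (2 * lamc - 2 * (lamc - lam) * r s)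
      = 2 * lamh + 2 * (lam - lamh) * (r s) ^ 2 := by
    intro s
    rw [hr, hκ, hΛ₁]
    field_simp [(h1E s).ne', hch.ne']
    ring
  have hbtd : ∀ s, HasDerivAt bt (bt s * (2 * lamc - 2 * (lamc - lam) * r s)) s := by
    intro s; have := hbt' s; rwa [hId1 s] at this
  have hatd : ∀ s, HasDerivAt (fun x => r x * bt x)
      (bt s * (2 * lamh + 2 * (lam - lamh) * (r s) ^ 2)) s := by
    intro s
    have h := (hr' s).mul (hbtd s)
    refine h.congr_deriv ?_
    have := hId2 s
    rw [← this]; ring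
  -- integrability of bt on half lines
  have hbtcont : Continuous bt := by
    rw [hbt]
    apply Real.continuous_exp.comp
    apply Continuous.add
    · exact continuous_const.mul continuous_id
    · apply Continuous.mul continuous_const
      apply Continuous.log
      · exact continuous_const.add (Real.continuous_exp.comp (continuous_const.mul continuous_id))
      · exact fun x => (h1E x).ne'
  have hlampos : 0 < 2 * lam := by linarith
  have hbtint : ∀ s, IntegrableOn bt (Iic s) := by
    intro s
    have hg : IntegrableOn (fun u => Real.exp (γ * Real.log (1 + E s)) * Real.exp (2 * lam * u))
        (Iic s) := (expMul_integrableOn_Iic hlampos s).const_mul _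
    refine Integrable.mono' hg hbtcont.aestronglyMeasurable ?_
    rw [ae_restrict_iff' measurableSet_Iic]
    filter_upwards with u hu
    have hu' : u ≤ s := hu
    rw [Real.norm_of_nonneg (hbtpos u).le, hbt]
    simp only
    rw [← Real.exp_add]
    apply Real.exp_le_exp.mpr
    have hEmono : E u ≤ E s := by
      rw [hE]; simp only
      exact Real.exp_le_exp.mpr (mul_le_mul_of_nonneg_left hu' hκpos.le)
    have hlog : Real.log (1 + E u) ≤ Real.log (1 + E s) :=
      Real.log_le_log (h1E u) (by linarith)
    nlinarith [hγpos]
  set T : ℝ → ℝ := fun s => ∫ u in Iic s, bt u with hT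
  have hTsub : ∀ x y : ℝ, T x - T y = ∫ u in y..x, bt u := by
    intro x y
    exact intervalIntegral.integral_Iic_sub_Iic (hbtint y) (hbtint x)
  have hT' : ∀ s, HasDerivAt T (bt s) s := by
    intro s
    have hfun : T = fun x => T 0 + ∫ u in (0:ℝ)..x, bt u := by
      funext x
      have := hTsub x 0
      linarith
    rw [hfun]
    exact (intervalIntegral.integral_hasDerivAt_right (hbtcont.intervalIntegrable 0 s)
      (hbtcont.stronglyMeasurableAtFilter volume (nhds s)) hbtcont.continuousAt).const_add (T 0)
  have hTmono : StrictMono T := by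
    intro x y hxy
    have hpos : 0 < ∫ u in x..y, bt u :=
      intervalIntegral.intervalIntegral_pos_of_pos (hbtcont.intervalIntegrable x y)
        hbtpos hxy
    have := hTsub y x
    linarith
  have hTpos : ∀ s, 0 < T s := by
    intro s
    have hnn : 0 ≤ T (s - 1) := setIntegral_nonneg measurableSet_Iic (fun u _ => (hbtpos u).le)
    have hpos : 0 < ∫ u in (s-1)..s, bt u :=
      intervalIntegral.intervalIntegral_pos_of_pos (hbtcont.intervalIntegrable _ _)
        hbtpos (by linarith)
    have := hTsub s (s - 1)
    linarith
  have hTbot : Tendsto T atBot (𝓝 0) := by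
    have hlim := MeasureTheory.intervalIntegral_tendsto_integral_Iic 0 (hbtint 0)
      (tendsto_id (α := ℝ))
    have heq : T = fun y => T 0 - ∫ u in y..0, bt u := by
      funext y; have := hTsub 0 y; linarith
    rw [heq]
    have h0 : Tendsto (fun y : ℝ => T 0 - ∫ u in y..0, bt u) atBot (𝓝 (T 0 - T 0)) :=
      tendsto_const_nhds.sub hlim
    simpa using h0
  have hTtop : Tendsto T atTop atTop := by
    apply tendsto_atTop_mono' atTop (show ∀ᶠ x in atTop, T 0 + x ≤ T x from ?_)
    · exact tendsto_atTop_add_const_left _ _ tendsto_id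
    filter_upwards [eventually_ge_atTop (0:ℝ)] with x hx
    have hone : ∀ u ∈ Icc (0:ℝ) x, 1 ≤ bt u := by
      intro u hu
      rw [hbt]; simp only
      apply Real.one_le_exp
      have h1' : 0 ≤ Real.log (1 + E u) := Real.log_nonneg (by nlinarith [hEpos u])
      have : 0 ≤ 2 * lam * u := by nlinarith [hu.1]
      nlinarith [hγpos]
    have hint : (x : ℝ) ≤ ∫ u in (0:ℝ)..x, bt u := by
      have := intervalIntegral.integral_mono_on hx
        (_root_.intervalIntegrable_const (μ := volume) (c := (1:ℝ))) (hbtcont.intervalIntegrable 0 x) hone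
      simpa using this
    have := hTsub x 0
    linarith
  have hTcont : Continuous T := by
    rw [continuous_iff_continuousAt]; exact fun s => (hT' s).continuousAt
  have hsurj : ∀ τ : ℝ, 0 < τ → ∃ s, T s = τ := by
    intro τ hτ
    obtain ⟨s₁, hs₁⟩ := (hTbot.eventually_lt_const hτ).exists
    obtain ⟨s₂, hs₂, hs₂'⟩ := ((hTtop.eventually_ge_atTop τ).and (eventually_ge_atTop s₁)).exists
    obtain ⟨s, _, hs⟩ := intermediate_value_Icc hs₂' hTcont.continuousOn ⟨hs₁.le, hs₂⟩
    exact ⟨s, hs⟩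
  choose Sfun hSfun using hsurj
  set S : ℝ → ℝ := fun τ => if h : 0 < τ then Sfun τ h else 0 with hS
  have hTS : ∀ τ : ℝ, 0 < τ → T (S τ) = τ := by
    intro τ h; rw [hS]; simp only [dif_pos h]; exact hSfun τ h
  have hSlt : ∀ τ : ℝ, 0 < τ → ∀ m : ℝ, T m < τ → m < S τ := by
    intro τ h m hm
    have : T m < T (S τ) := by rwa [hTS τ h]
    exact hTmono.lt_iff_lt.mp this
  have hSgt : ∀ τ : ℝ, 0 < τ → ∀ m : ℝ, τ < T m → S τ < m := by
    intro τ h m hm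
    have : T (S τ) < T m := by rwa [hTS τ h]
    exact hTmono.lt_iff_lt.mp this
  have hScont : ∀ τ : ℝ, 0 < τ → ContinuousAt S τ := by
    intro τ hτ
    rw [ContinuousAt]
    apply tendsto_order.2
    constructor
    · intro m hm
      have hTm : T m < τ := by
        have : T m < T (S τ) := hTmono hm
        rwa [hTS τ hτ] at this
      have hTmpos : 0 < T m := hTpos m
      filter_upwards [Ioi_mem_nhds hTm] with y hy
      exact hSlt y (lt_trans hTmpos hy) m hy
    · intro m hm
      have hTm : τ < T m := by
        have : T (S τ) < T m := hTmono hm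
        rwa [hTS τ hτ] at this
      filter_upwards [Ioo_mem_nhds hτ hTm] with y hy
      exact hSgt y hy.1 m hy.2
  have hS' : ∀ τ : ℝ, 0 < τ → HasDerivAt S (bt (S τ))⁻¹ τ := by
    intro τ hτ
    refine HasDerivAt.of_local_left_inverse (hScont τ hτ) (hT' (S τ)) (hbtpos _).ne' ?_
    filter_upwards [Ioi_mem_nhds hτ] with y hy
    exact hTS y hy
  have hSbot : Tendsto S (𝓝[>] (0:ℝ)) atBot := by
    apply tendsto_atBot.2
    intro M
    filter_upwards [Ioo_mem_nhdsGT_of_mem ⟨le_refl (0:ℝ), hTpos M⟩] with y hy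
    exact (hSgt y hy.1 M hy.2).le
  have hStop : Tendsto S atTop atTop := by
    apply tendsto_atTop.2
    intro M
    filter_upwards [eventually_gt_atTop (max (T M) 0)] with y hy
    have h0 : 0 < y := lt_of_le_of_lt (le_max_right _ _) hy
    exact (hSlt y h0 M (lt_of_le_of_lt (le_max_left _ _) hy)).le
  -- limits of E, r, bt
  have hEbot : Tendsto E atBot (𝓝 0) := by
    rw [hE]
    exact Real.tendsto_exp_atBot.comp (Tendsto.const_mul_atBot hκpos tendsto_id)
  have hEtop : Tendsto E atTop atTop := by
    rw [hE]
    exact Real.tendsto_exp_atTop.comp (Tendsto.const_mul_atTop hκpos tendsto_id)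
  have h1Ebot : Tendsto (fun s => 1 + E s) atBot (𝓝 1) := by
    simpa using tendsto_const_nhds.add hEbot
  have hr1 : Tendsto r atBot (𝓝 1) := by
    rw [hr]
    have h := tendsto_const_nhds (x := Λ₁) (f := atBot (α := ℝ)) |>.add
      ((tendsto_const_nhds (x := (1 - Λ₁))).div h1Ebot one_ne_zero)
    simpa using h
  have hrL : Tendsto r atTop (𝓝 Λ₁) := by
    rw [hr]
    have hdiv : Tendsto (fun s => (1 - Λ₁) / (1 + E s)) atTop (𝓝 0) :=
      Tendsto.div_atTop tendsto_const_nhds (tendsto_atTop_add_const_left _ 1 hEtop)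
    simpa using tendsto_const_nhds.add hdiv
  have hbtbot : Tendsto bt atBot (𝓝 0) := by
    rw [hbt]
    apply Real.tendsto_exp_atBot.comp
    apply Filter.Tendsto.atBot_add (Tendsto.const_mul_atBot hlampos tendsto_id)
    have hlog : Tendsto (fun s => Real.log (1 + E s)) atBot (𝓝 (Real.log 1)) :=
      ((Real.continuousAt_log one_ne_zero).tendsto).comp h1Ebot
    rw [Real.log_one] at hlog
    simpa using hlog.const_mul γ
  have hab : ∀ τ, (r (S τ) * bt (S τ)) / bt (S τ) = r (S τ) :=
    fun τ => mul_div_cancel_right₀ _ (hbtpos _).ne'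
  have hranti : ∀ s₁ s₂ : ℝ, s₁ < s₂ → r s₂ < r s₁ := by
    intro s₁ s₂ h
    rw [hr]; simp only
    have hE12 : E s₁ < E s₂ := by
      rw [hE]; exact Real.exp_lt_exp.mpr (by nlinarith)
    have := div_lt_div_of_pos_left (by linarith : (0:ℝ) < 1 - Λ₁) (h1E s₁)
      (by linarith : 1 + E s₁ < 1 + E s₂)
    linarith
  have hbb' : ∀ x : ℝ, 0 < x →
      HasDerivAt (fun τ => bt (S τ)) (2 * lamc - 2 * (lamc - lam) * r (S x)) x := by
    intro x hx
    have h := (hbtd (S x)).comp x (hS' x hx)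
    have h2 : HasDerivAt (fun y => bt (S y))
        (bt (S x) * (2 * lamc - 2 * (lamc - lam) * r (S x)) * (bt (S x))⁻¹) x := by
      simpa [Function.comp_def] using h
    convert h2 using 1
    have hb := (hbtpos (S x)).ne'
    field_simp
  refine ⟨0, fun τ => r (S τ) * bt (S τ), fun τ => bt (S τ),
    fun τ _ => ⟨mul_pos (hrpos _) (hbtpos _), hbtpos _⟩, ?_, ?_, ?_, ?_, ?_, ?_, ?_, ?_, ?_⟩
  · -- a equation
    intro τ hτ
    have hτ0 : (0:ℝ) < τ := hτ
    have h := (hatd (S τ)).comp τ (hS' τ hτ0)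
    have h2 : HasDerivAt (fun y => r (S y) * bt (S y))
        (bt (S τ) * (2 * lamh + 2 * (lam - lamh) * (r (S τ)) ^ 2) * (bt (S τ))⁻¹) τ := by
      simpa [Function.comp_def] using h
    convert h2 using 1
    have hb := (hbtpos (S τ)).ne'
    field_simp
  · -- b equation
    intro τ hτ
    have hτ0 : (0:ℝ) < τ := hτ
    have h := hbb' τ hτ0
    convert h using 1
    rw [hab τ]
  · -- bounds on ratio
    intro τ hτ
    rw [hab τ]
    exact hrlt (S τ)
  · -- strict anti
    intro τ₁ h₁ τ₂ h₂ h12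
    simp only [hab]
    have hτ₁ : (0:ℝ) < τ₁ := h₁
    have hτ₂ : (0:ℝ) < τ₂ := h₂
    have hSS : S τ₁ < S τ₂ := by
      apply hSlt τ₂ hτ₂
      rw [hTS τ₁ hτ₁]
      exact h12
    exact hranti _ _ hSS
  · -- a tendsto 0
    have h := (hr1.comp hSbot).mul (hbtbot.comp hSbot)
    simpa using h
  · -- b tendsto 0
    exact hbtbot.comp hSbot
  · -- ratio to 1
    simp only [hab]
    exact hr1.comp hSbot
  · -- ratio to Λ₁
    simp only [hab]
    exact hrL.comp hStop
  · -- linear growth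
    refine ⟨lam, bt (S 1) + 2 * lamc, by linarith, by nlinarith [hbtpos (S 1)], ?_⟩
    have hg1 : ∀ x : ℝ, 0 < x → HasDerivAt (fun τ => bt (S τ) - 2 * lam * τ)
        (2 * lamc - 2 * (lamc - lam) * r (S x) - 2 * lam) x := by
      intro x hx
      exact (hbb' x hx).sub (by simpa using (hasDerivAt_id x).const_mul (2 * lam))
    have hg2 : ∀ x : ℝ, 0 < x → HasDerivAt (fun τ => 2 * lamc * τ - bt (S τ))
        (2 * lamc - (2 * lamc - 2 * (lamc - lam) * r (S x))) x := by
      intro x hx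
      exact (by simpa using (hasDerivAt_id x).const_mul (2 * lamc) :
        HasDerivAt (fun τ : ℝ => 2 * lamc * τ) (2 * lamc) x).sub (hbb' x hx)
    have hmono1 : MonotoneOn (fun τ => bt (S τ) - 2 * lam * τ) (Ici (1:ℝ)) := by
      apply monotoneOn_of_deriv_nonneg (convex_Ici 1)
      · intro x hx
        have hx0 : (0:ℝ) < x := lt_of_lt_of_le one_pos hx
        exact (hg1 x hx0).continuousAt.continuousWithinAt
      · rw [interior_Ici]
        intro x hx
        have hx0 : (0:ℝ) < x := lt_trans one_pos hx
        exact (hg1 x hx0).differentiableAt.differentiableWithinAt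
      · rw [interior_Ici]
        intro x hx
        have hx0 : (0:ℝ) < x := lt_trans one_pos hx
        rw [(hg1 x hx0).deriv]
        nlinarith [(hrlt (S x)).2]
    have hmono2 : MonotoneOn (fun τ => 2 * lamc * τ - bt (S τ)) (Ici (1:ℝ)) := by
      apply monotoneOn_of_deriv_nonneg (convex_Ici 1)
      · intro x hx
        have hx0 : (0:ℝ) < x := lt_of_lt_of_le one_pos hx
        exact (hg2 x hx0).continuousAt.continuousWithinAt
      · rw [interior_Ici]
        intro x hx
        have hx0 : (0:ℝ) < x := lt_trans one_pos hx
        exact (hg2 x hx0).differentiableAt.differentiableWithinAt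
      · rw [interior_Ici]
        intro x hx
        have hx0 : (0:ℝ) < x := lt_trans one_pos hx
        rw [(hg2 x hx0).deriv]
        nlinarith [hrpos (S x)]
    filter_upwards [eventually_ge_atTop (2:ℝ)] with τ hτ
    have h1mem : (1:ℝ) ∈ Ici (1:ℝ) := Set.mem_Ici.mpr (le_refl 1)
    have hτmem : τ ∈ Ici (1:ℝ) := by simp; linarith
    have hk1 := hmono1 h1mem hτmem (by linarith)
    have hk2 := hmono2 h1mem hτmem (by linarith)
    simp only at hk1 hk2
    constructor
    · nlinarith [hbtpos (S 1)]
    · nlinarith [hbtpos (S 1)]
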